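/- For every k ∈ ℕ there exist a bipartite graph G and a list assignment L with |L(v)| ≥ k for every vertex such that G has no L-coloring; hence the list chromatic number of bipartite graphs is unbounded even though their chromatic number is at most 2. -/

import Mathlib

/-- For every `k` there is a (finite) bipartite graph `G` (i.e. `χ(G) ≤ 2`) and a
list assignment with all lists of size at least `k` admitting no proper coloring
from the lists: the list chromatic number of bipartite graphs is unbounded. -/
theorem stmt17 (k : ℕ) :
    ∃ (V : Type) (_ : Fintype V) (G : SimpleGraph V) (L : V → Finset ℕ),
      G.Colorable 2 ∧ (∀ v, k ≤ (L v).card) ∧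
      ¬ ∃ c : V → ℕ, (∀ v, c v ∈ L v) ∧ ∀ u v, G.Adj u v → c u ≠ c v := by
  classical
  refine ⟨Finset (Fin (2*k-1)) × Bool, inferInstance,
    { Adj := fun p q => p.2 ≠ q.2 ∧ p.1.card = k ∧ q.1.card = k
      symm := ⟨fun p q h => ⟨Ne.symm h.1, h.2.2, h.2.1⟩⟩
      loopless := ⟨fun p h => h.1 rfl⟩ },
    fun p => if p.1.card = k then p.1.image Fin.val else Finset.range k,
    ?_, ?_, ?_⟩
  · exact ⟨fun p => if p.2 then 0 else 1, by
      rintro ⟨A, a⟩ ⟨B, b⟩ ⟨h1, -, -⟩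
      simp only [ne_eq] at h1 ⊢
      cases a <;> cases b <;> simp_all⟩
  · rintro ⟨A, b⟩
    dsimp only
    split
    · rw [Finset.card_image_of_injective _ Fin.val_injective]; omega
    · simp
  · rintro ⟨c, hc, hadj⟩
    set C : Finset (Fin (2*k-1)) :=
      Finset.univ.filter
        (fun i => ∃ A : Finset (Fin (2*k-1)), A.card = k ∧ c (A, true) = i.val) with hC
    by_cases h : k ≤ C.card
    · obtain ⟨B, hBC, hBcard⟩ := Finset.exists_subset_card_eq h
      have h1 := hc (B, false)
      obtain ⟨b, hbB, hbv⟩ := Finset.mem_image.mp (by simpa [hBcard] using h1)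
      have hbC := hBC hbB
      rw [hC, Finset.mem_filter] at hbC
      obtain ⟨-, A, hA, hAc⟩ := hbC
      exact hadj (A, true) (B, false) ⟨by simp, hA, hBcard⟩ (by rw [hAc, hbv])
    · push_neg at h
      have hcompl : k ≤ Cᶜ.card := by
        have h2 := Finset.card_compl C
        have h3 : C.card ≤ Fintype.card (Fin (2*k-1)) := Finset.card_le_univ C
        simp only [Fintype.card_fin] at h2 h3
        omega
      obtain ⟨A, hAC, hAcard⟩ := Finset.exists_subset_card_eq hcompl
      have h1 := hc (A, true)
      obtain ⟨a, haA, hav⟩ := Finset.mem_image.mp (by simpa [hAcard] using h1)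
      have haC : a ∈ C := by
        rw [hC, Finset.mem_filter]
        exact ⟨Finset.mem_univ _, A, hAcard, hav.symm⟩
      exact (Finset.mem_compl.mp (hAC haA)) haC
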